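/- Let S be a finite semigroup in DS and let m be a positive integer such that g^m is the identity element of G for every subgroup G of S (for instance, the least common multiple of the exponents of the subgroups of S). If a word u admits a decomposition u = u_0 u_1 ⋯ u_k with k > |S| and alf(u_0) = alf(u_1) = ⋯ = alf(u_k), then S satisfies the identity u ≈ u^{m+1}. -/

import Mathlib

/-! ### Identities and finite bases -/

/-- A semigroup `S` satisfies the identity `u ≈ v` (for words `u`, `v` in the free semigroup on
the countably infinite set of variables `ℕ`) if every homomorphism from the free semigroup to
`S` — equivalently, every substitution `f : ℕ → S` — equalizes `u` and `v`. -/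
def Satisfies (S : Type*) [Semigroup S] (u v : FreeSemigroup ℕ) : Prop :=
  ∀ f : ℕ → S, FreeSemigroup.lift f u = FreeSemigroup.lift f v

/-- A semigroup is finitely based if there is a finite set of identities it satisfies such that
every semigroup satisfying those identities satisfies every identity of `S`. -/
def FinitelyBased (S : Type*) [Semigroup S] : Prop :=
  ∃ B : Finset (FreeSemigroup ℕ × FreeSemigroup ℕ),
    (∀ p ∈ B, Satisfies S p.1 p.2) ∧
    ∀ (T : Type) [Semigroup T], (∀ p ∈ B, Satisfies T p.1 p.2) →
      ∀ u v : FreeSemigroup ℕ, Satisfies S u v → Satisfies T u v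

/-- `T` belongs to the variety generated by `S`: `T` satisfies every identity of `S`. -/
def InVarietyOf (T S : Type*) [Semigroup T] [Semigroup S] : Prop :=
  ∀ u v : FreeSemigroup ℕ, Satisfies S u v → Satisfies T u v

/-! ### Combinatorics of words, viewed as lists of variables -/

/-- The list of letters of a word of the free semigroup. -/
def wToList (w : FreeSemigroup ℕ) : List ℕ := w.head :: w.tail

/-- The word of the free semigroup whose list of letters is the given (nonempty) list
(a junk value is returned on the empty list). -/
def wOfList : List ℕ → FreeSemigroup ℕ
  | [] => FreeSemigroup.of 0
  | a :: l => ⟨a, l⟩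

/-- `restrict w X` is the word `w(X)` (possibly empty) obtained from `w` by deleting all
occurrences of variables not belonging to `X`. -/
noncomputable def restrict (w : List ℕ) (X : Set ℕ) : List ℕ :=
  w.filter fun a => @decide (a ∈ X) (Classical.propDecidable _)

/-- The word `u` occurs as a factor of `w` at most once: there is at most one decomposition
`w = v' ++ u ++ v''`. -/
def FactorAtMostOnce (u w : List ℕ) : Prop :=
  ∀ p₁ s₁ p₂ s₂ : List ℕ, p₁ ++ u ++ s₁ = w → p₂ ++ u ++ s₂ = w → p₁ = p₂ ∧ s₁ = s₂

/-- Between any two occurrences (at positions `i < j`) of any variable `z` in `w` there occur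
at least `n` pairwise distinct variables. -/
def DistinctBetween (n : ℕ) (w : List ℕ) : Prop :=
  ∀ (z i j : ℕ), i < j → w[i]? = some z → w[j]? = some z →
    n ≤ ((w.take j).drop (i + 1)).toFinset.card

/-- A word is sparse if between any two occurrences of a repeated variable there is an
occurrence of some linear variable (i.e. a variable occurring exactly once in the word). -/
def Sparse (w : List ℕ) : Prop :=
  ∀ (z i j : ℕ), i < j → w[i]? = some z → w[j]? = some z →
    ∃ y, w.count y = 1 ∧ y ∈ (w.take j).drop (i + 1)

/-- The `j`-th power of a word, as a list. -/
def powerList (j : ℕ) (l : List ℕ) : List ℕ := (List.replicate j l).flatten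

/-! ### Green's relations and the pseudovarieties `DS` and `LDS` -/

section Green
variable {S : Type*} [Semigroup S]

/-- The principal right ideal `xS¹ = {x} ∪ xS`. -/
def rIdeal (x : S) : Set S := insert x {z | ∃ u, x * u = z}

/-- The principal left ideal `S¹x = {x} ∪ Sx`. -/
def lIdeal (x : S) : Set S := insert x {z | ∃ u, u * x = z}

/-- Green's relation `R`: `x R y` iff `xS¹ = yS¹`. -/
def GreenR (x y : S) : Prop := rIdeal x = rIdeal y

/-- Green's relation `L`: `x L y` iff `S¹x = S¹y`. -/
def GreenL (x y : S) : Prop := lIdeal x = lIdeal y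

/-- Green's relation `D = R ∘ L`. -/
def GreenD (x y : S) : Prop := ∃ z, GreenR x z ∧ GreenL z y

/-- The local subsemigroup `eSe = {ese : s ∈ S}` of `S` (the local submonoid at `e` when `e`
is idempotent). -/
def localSub (e : S) : Subsemigroup S where
  carrier := {x | ∃ s : S, x = e * s * e}
  mul_mem' := by
    rintro a b ⟨s, rfl⟩ ⟨t, rfl⟩
    exact ⟨s * e * (e * t), by simp [mul_assoc]⟩

end Green

/-- Membership in the pseudovariety `DS`: every `D`-class containing an idempotent is closed
under multiplication. -/
def MemDS (S : Type*) [Semigroup S] [Finite S] : Prop :=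
  ∀ e x y : S, e * e = e → GreenD x e → GreenD y e → GreenD (x * y) e

/-- Membership in the pseudovariety `LDS`: every local submonoid `eSe` (for `e` idempotent)
lies in `DS`. -/
def MemLDS (S : Type*) [Semigroup S] [Finite S] : Prop :=
  ∀ e : S, e * e = e → MemDS (localSub e)

/-! ### Powers in semigroups and subgroups of semigroups -/

/-- `spow x n` is the `n`-th power `x^n` of an element of a semigroup, for `n ≥ 1`
(with the convention `spow x 0 = x`). -/
def spow {S : Type*} [Semigroup S] (x : S) : ℕ → S
  | 0 => x
  | 1 => x
  | n + 2 => spow x (n + 1) * x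

/-- `G` is a subgroup of the semigroup `S` with identity element `e`: a subsemigroup that is
a group under the induced multiplication, with identity `e`. -/
def IsSubgroupWithIdentity {S : Type*} [Semigroup S] (G : Subsemigroup S) (e : S) : Prop :=
  e ∈ G ∧ (∀ g ∈ G, e * g = g ∧ g * e = g) ∧ ∀ g ∈ G, ∃ h ∈ G, g * h = e ∧ h * g = e


section DSAux

variable {S : Type*} [Semigroup S]

theorem spow_one' (x : S) : spow x 1 = x := rfl

theorem spow_two' (x : S) : spow x 2 = x * x := rfl

theorem spow_succ (x : S) {n : ℕ} (hn : 1 ≤ n) : spow x (n + 1) = spow x n * x := by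
  cases n with
  | zero => omega
  | succ n => rfl

theorem spow_add (x : S) {a b : ℕ} (ha : 1 ≤ a) (hb : 1 ≤ b) :
    spow x (a + b) = spow x a * spow x b := by
  induction b with
  | zero => omega
  | succ b ih =>
    rcases Nat.lt_or_ge 1 (b + 1) with h | h
    · have hb1 : 1 ≤ b := by omega
      rw [← Nat.add_assoc, spow_succ x (by omega : 1 ≤ a + b), ih hb1,
        spow_succ x hb1, mul_assoc]
    · have : b = 0 := by omega
      subst this
      rw [spow_succ x ha, spow_one']

theorem spow_succ' (x : S) {n : ℕ} (hn : 1 ≤ n) : spow x (n + 1) = x * spow x n := by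
  calc spow x (n + 1) = spow x (1 + n) := by rw [Nat.add_comm]
  _ = spow x 1 * spow x n := spow_add x le_rfl hn
  _ = x * spow x n := by rw [spow_one']

theorem mul_spow_fix {a t : S} (h : a * t = a) : ∀ n, 1 ≤ n → a * spow t n = a := by
  intro n hn
  induction n, hn using Nat.le_induction with
  | base => exact h
  | succ n hn ih => rw [spow_succ t hn, ← mul_assoc, ih, h]

theorem spow_fix_right {w e : S} (h : w * e = w) : ∀ n, 1 ≤ n → spow w n * e = spow w n := by
  intro n hn
  induction n, hn using Nat.le_induction with
  | base => exact h
  | succ n hn ih => rw [spow_succ w hn, mul_assoc, h]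

theorem spow_period {x : S} {a p : ℕ} (ha : 1 ≤ a) (h : spow x a = spow x (a + p)) :
    ∀ n, a ≤ n → spow x n = spow x (n + p) := by
  intro n hn
  induction n, hn using Nat.le_induction with
  | base => exact h
  | succ n hn ih =>
    have h1 : 1 ≤ n := le_trans ha hn
    calc spow x (n + 1) = spow x n * x := spow_succ x h1
    _ = spow x (n + p) * x := by rw [← ih]
    _ = spow x (n + p + 1) := (spow_succ x (by omega)).symm
    _ = spow x (n + 1 + p) := by rw [show n + p + 1 = n + 1 + p from by omega]

theorem exists_period [Finite S] (x : S) :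
    ∃ a p, 1 ≤ a ∧ 1 ≤ p ∧ ∀ n, a ≤ n → spow x n = spow x (n + p) := by
  obtain ⟨a, b, hab, h⟩ := Finite.exists_ne_map_eq_of_infinite (fun n : ℕ => spow x (n + 1))
  rcases Nat.lt_or_ge a b with hlt | hge
  · refine ⟨a + 1, b - a, by omega, by omega, spow_period (by omega) ?_⟩
    rw [show a + 1 + (b - a) = b + 1 from by omega]
    exact h
  · have hlt : b < a := by omega
    refine ⟨b + 1, a - b, by omega, by omega, spow_period (by omega) ?_⟩
    rw [show b + 1 + (a - b) = a + 1 from by omega]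
    exact h.symm

theorem spow_period_mul {x : S} {a p : ℕ} (ha : 1 ≤ a) (hp : 1 ≤ p)
    (hper : ∀ n, a ≤ n → spow x n = spow x (n + p)) :
    ∀ q, spow x (a * p + q * p) = spow x (a * p) := by
  have haap : a ≤ a * p := Nat.le_mul_of_pos_right a hp
  intro q
  induction q with
  | zero => norm_num
  | succ q ih =>
    rw [show a * p + (q + 1) * p = a * p + q * p + p from by ring,
      ← hper _ (le_trans haap (Nat.le_add_right _ _)), ih]

theorem exists_idem_spow [Finite S] (x : S) :
    ∃ N, 1 ≤ N ∧ spow x N * spow x N = spow x N := by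
  obtain ⟨a, p, ha, hp, hper⟩ := exists_period x
  have hN : 1 ≤ a * p := Nat.one_le_iff_ne_zero.mpr (by positivity)
  refine ⟨a * p, hN, ?_⟩
  rw [← spow_add x hN hN]
  exact spow_period_mul ha hp hper a

theorem spow_cycle [Finite S] {x c : S} (h : x = x * x * c) :
    ∃ p, 1 ≤ p ∧ spow x (p + 1) = x := by
  have key : ∀ n, 1 ≤ n → x = spow x (n + 1) * spow c n := by
    intro n hn
    induction n, hn using Nat.le_induction with
    | base => simpa [spow_two', spow_one'] using h
    | succ n hn ih =>
      calc x = spow x (n + 1) * spow c n := ih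
      _ = (spow x n * x) * spow c n := by rw [spow_succ x hn]
      _ = (spow x n * (x * x * c)) * spow c n := by rw [← h]
      _ = spow x (n + 2) * spow c (n + 1) := by
          rw [spow_succ' c hn, show spow x (n + 2) = spow x (n + 1) * x from
            spow_succ x (by omega), spow_succ x hn]
          simp only [mul_assoc]
  obtain ⟨a, p, ha, hp, hper⟩ := exists_period x
  set N := a * p with hNdef
  have hN1 : 1 ≤ N := Nat.one_le_iff_ne_zero.mpr (by positivity)
  have hNa : a ≤ N := Nat.le_mul_of_pos_right a hp
  refine ⟨p, hp, ?_⟩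
  calc spow x (p + 1) = spow x p * x := spow_succ x hp
  _ = spow x p * (spow x (N + 1) * spow c N) := by rw [← key N hN1]
  _ = spow x (p + (N + 1)) * spow c N := by
      rw [← mul_assoc, ← spow_add x hp (by omega)]
  _ = spow x (N + 1) * spow c N := by
      rw [show p + (N + 1) = (N + 1) + p from by omega, ← hper (N + 1) (by omega)]
  _ = x := (key N hN1).symm

end DSAux
section GreenAux

variable {S : Type*} [Semigroup S]

theorem mem_rIdeal_self (x : S) : x ∈ rIdeal x := Set.mem_insert _ _

theorem mem_lIdeal_self (x : S) : x ∈ lIdeal x := Set.mem_insert _ _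

theorem mem_rIdeal_iff {x y : S} : x ∈ rIdeal y ↔ x = y ∨ ∃ u, y * u = x :=
  Set.mem_insert_iff

theorem mem_lIdeal_iff {x y : S} : x ∈ lIdeal y ↔ x = y ∨ ∃ u, u * y = x :=
  Set.mem_insert_iff

theorem rIdeal_le {x y : S} (h : x ∈ rIdeal y) : rIdeal x ⊆ rIdeal y := by
  rw [mem_rIdeal_iff] at h
  intro z hz
  rw [mem_rIdeal_iff] at hz ⊢
  rcases h with rfl | ⟨u, rfl⟩
  · exact hz
  · rcases hz with rfl | ⟨v, rfl⟩
    · exact Or.inr ⟨u, rfl⟩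
    · exact Or.inr ⟨u * v, (mul_assoc _ _ _).symm⟩

theorem lIdeal_le {x y : S} (h : x ∈ lIdeal y) : lIdeal x ⊆ lIdeal y := by
  rw [mem_lIdeal_iff] at h
  intro z hz
  rw [mem_lIdeal_iff] at hz ⊢
  rcases h with rfl | ⟨u, rfl⟩
  · exact hz
  · rcases hz with rfl | ⟨v, rfl⟩
    · exact Or.inr ⟨u, rfl⟩
    · exact Or.inr ⟨v * u, mul_assoc _ _ _⟩

theorem greenR_of_mem {x y : S} (h1 : x ∈ rIdeal y) (h2 : y ∈ rIdeal x) : GreenR x y :=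
  Set.Subset.antisymm (rIdeal_le h2) (rIdeal_le h1) |>.symm

theorem greenL_of_mem {x y : S} (h1 : x ∈ lIdeal y) (h2 : y ∈ lIdeal x) : GreenL x y :=
  Set.Subset.antisymm (lIdeal_le h2) (lIdeal_le h1) |>.symm

theorem greenD_refl (x : S) : GreenD x x := ⟨x, rfl, rfl⟩

theorem greenD_symm {x y : S} (h : GreenD x y) : GreenD y x := by
  obtain ⟨z, hR, hL⟩ := h
  have hxz : x ∈ rIdeal z := by rw [← hR]; exact mem_rIdeal_self x
  have hzx : z ∈ rIdeal x := by rw [hR]; exact mem_rIdeal_self z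
  have hzy : z ∈ lIdeal y := by rw [← hL]; exact mem_lIdeal_self z
  have hyz : y ∈ lIdeal z := by rw [hL]; exact mem_lIdeal_self y
  rw [mem_rIdeal_iff] at hxz hzx
  rw [mem_lIdeal_iff] at hzy hyz
  rcases hxz with h3 | ⟨q, hq⟩
  · -- x = z
    subst h3
    exact ⟨y, rfl, hL.symm⟩
  rcases hyz with h4 | ⟨s, hs⟩
  · -- y = z
    subst h4
    exact ⟨x, hR.symm, rfl⟩
  rcases hzx with h5 | ⟨p, hp⟩
  · -- z = x
    rw [h5] at hL
    exact ⟨y, rfl, hL.symm⟩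
  rcases hzy with h6 | ⟨r, hr⟩
  · -- z = y
    rw [h6] at hR
    exact ⟨x, hR.symm, rfl⟩
  -- main case
  refine ⟨s * x, greenR_of_mem ?_ ?_, greenL_of_mem ?_ ?_⟩
  · -- y ∈ rIdeal (s * x)
    rw [mem_rIdeal_iff]
    refine Or.inr ⟨p, ?_⟩
    calc s * x * p = s * (x * p) := mul_assoc _ _ _
    _ = s * z := by rw [hp]
    _ = y := hs
  · -- s * x ∈ rIdeal y
    rw [mem_rIdeal_iff]
    refine Or.inr ⟨q, ?_⟩
    calc y * q = (s * z) * q := by rw [hs]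
    _ = s * (z * q) := mul_assoc _ _ _
    _ = s * x := by rw [hq]
  · -- s * x ∈ lIdeal x
    rw [mem_lIdeal_iff]
    exact Or.inr ⟨s, rfl⟩
  · -- x ∈ lIdeal (s * x)
    rw [mem_lIdeal_iff]
    refine Or.inr ⟨r, ?_⟩
    calc r * (s * x) = r * (s * (z * q)) := by rw [hq]
    _ = (r * (s * z)) * q := by simp only [mul_assoc]
    _ = (r * y) * q := by rw [hs]
    _ = z * q := by rw [hr]
    _ = x := hq

end GreenAux
section FWAux

variable {S : Type*} [Semigroup S]

/-- `y` occurs as a (possibly border) factor of `x`. -/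
def FW (x y : S) : Prop := ∃ u v : WithOne S, u * (y : WithOne S) * v = (x : WithOne S)

theorem FW_refl (x : S) : FW x x := ⟨1, 1, by simp⟩

theorem FW_mul_right {x y : S} (h : FW x y) (s : S) : FW (x * s) y := by
  obtain ⟨u, v, h⟩ := h
  refine ⟨u, v * (s : WithOne S), ?_⟩
  rw [← mul_assoc, h, ← WithOne.coe_mul]

theorem FW_mul_left {x y : S} (h : FW x y) (s : S) : FW (s * x) y := by
  obtain ⟨u, v, h⟩ := h
  refine ⟨(s : WithOne S) * u, v, ?_⟩
  rw [mul_assoc, mul_assoc, ← mul_assoc u, h, ← WithOne.coe_mul]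

theorem FW_trans {x y z : S} (h1 : FW x y) (h2 : FW y z) : FW x z := by
  obtain ⟨u, v, h1⟩ := h1
  obtain ⟨u', v', h2⟩ := h2
  refine ⟨u * u', v' * v, ?_⟩
  calc u * u' * (z : WithOne S) * (v' * v) = u * (u' * (z : WithOne S) * v') * v := by
        simp only [mul_assoc]
  _ = u * (y : WithOne S) * v := by rw [h2]
  _ = x := h1

theorem FW_spow {x y : S} (h : FW x y) : ∀ n, FW (spow x n) y := by
  intro n
  induction n with
  | zero => exact h
  | succ n ih =>
    rcases Nat.eq_zero_or_pos n with rfl | hn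
    · exact h
    · rw [spow_succ x hn]
      exact FW_mul_right ih x

theorem FW_extract {e g : S} (he : e * e = e) (h : FW e g) :
    ∃ U V : S, U * g * V = e ∧ e * U = U ∧ V * e = V := by
  obtain ⟨u, v, h⟩ := h
  rcases eq_or_ne u 1 with rfl | hu
  · rcases eq_or_ne v 1 with rfl | hv
    · -- e = g
      simp only [one_mul, mul_one, WithOne.coe_inj] at h
      refine ⟨e, e, ?_, he, he⟩
      rw [h, he, he]
    · obtain ⟨v₀, rfl⟩ := WithOne.ne_one_iff_exists.mp hv
      simp only [one_mul, ← WithOne.coe_mul, WithOne.coe_inj] at h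
      -- h : g * v₀ = e
      refine ⟨e, v₀ * e, ?_, he, by rw [mul_assoc, he]⟩
      calc e * g * (v₀ * e) = e * (g * v₀) * e := by simp only [mul_assoc]
      _ = e := by rw [h, he, he]
  · obtain ⟨u₀, rfl⟩ := WithOne.ne_one_iff_exists.mp hu
    rcases eq_or_ne v 1 with rfl | hv
    · simp only [mul_one, ← WithOne.coe_mul, WithOne.coe_inj] at h
      -- h : u₀ * g = e
      refine ⟨e * u₀, e, ?_, by rw [← mul_assoc, he], he⟩
      calc (e * u₀) * g * e = e * (u₀ * g) * e := by simp only [mul_assoc]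
      _ = e := by rw [h, he, he]
    · obtain ⟨v₀, rfl⟩ := WithOne.ne_one_iff_exists.mp hv
      simp only [← WithOne.coe_mul, WithOne.coe_inj] at h
      -- h : u₀ * g * v₀ = e
      refine ⟨e * u₀, v₀ * e, ?_, by rw [← mul_assoc, he], by rw [mul_assoc, he]⟩
      calc (e * u₀) * g * (v₀ * e) = e * (u₀ * g * v₀) * e := by simp only [mul_assoc]
      _ = e := by rw [h, he, he]

end FWAux
section StepAux

variable {S : Type*} [Semigroup S]

/-- If `w ∈ eSe` and `w` is `D`-equivalent to the idempotent `e`, then some positive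
power of `w` equals `e`. -/
theorem spow_eq_idem_of_D [Finite S] {e w : S} (he : e * e = e) (h1 : e * w = w)
    (h2 : w * e = w) (hD : GreenD w e) : ∃ N, 1 ≤ N ∧ spow w N = e := by
  obtain ⟨z, hR, hL⟩ := hD
  have hz : z ∈ rIdeal w := by rw [hR]; exact mem_rIdeal_self z
  have he' : e ∈ lIdeal z := by rw [hL]; exact mem_lIdeal_self e
  rw [mem_rIdeal_iff] at hz
  rw [mem_lIdeal_iff] at he'
  -- Step 1 (stability): e = w or e = w * σ
  have hcase : e = w ∨ ∃ σ : S, e = w * σ := by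
    have hez : e * z = z := by
      rcases hz with rfl | ⟨u, rfl⟩
      · exact h1
      · rw [← mul_assoc, h1]
    rcases he' with h3 | ⟨s, hs⟩
    · -- e = z
      rw [h3] at hez ⊢
      rcases hz with h4 | ⟨u, hu⟩
      · exact Or.inl h4
      · exact Or.inr ⟨u, hu.symm⟩
    · -- s * z = e
      have key : ∀ n, 1 ≤ n → spow s n * (e * spow z n) = e := by
        intro n hn
        induction n, hn using Nat.le_induction with
        | base =>
          show s * (e * z) = e
          rw [hez]; exact hs
        | succ n hn ih =>
          calc spow s (n + 1) * (e * spow z (n + 1))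
              = (spow s n * s) * (e * (z * spow z n)) := by
                rw [spow_succ s hn, spow_succ' z hn]
          _ = spow s n * ((s * (e * z)) * spow z n) := by simp only [mul_assoc]
          _ = spow s n * (e * spow z n) := by rw [hez, hs]
          _ = e := ih
      obtain ⟨N, hN, hidem⟩ := exists_idem_spow z
      have h5 : e * spow z N = e := by
        have hkey := key N hN
        calc e * spow z N = (spow s N * (e * spow z N)) * spow z N := by rw [hkey]
        _ = spow s N * (e * (spow z N * spow z N)) := by simp only [mul_assoc]
        _ = spow s N * (e * spow z N) := by rw [hidem]
        _ = e := hkey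
      have h6 : e = z ∨ ∃ τ : S, e = z * τ := by
        rcases Nat.lt_or_ge N 2 with hN2 | hN2
        · have hN1 : N = 1 := by omega
          rw [hN1] at h5
          exact Or.inl ((h5.symm).trans hez)
        · refine Or.inr ⟨spow z (N - 1), ?_⟩
          have hsp : spow z N = z * spow z (N - 1) := by
            have := spow_succ' z (n := N - 1) (by omega)
            rwa [show N - 1 + 1 = N from by omega] at this
          calc e = e * spow z N := h5.symm
          _ = e * (z * spow z (N - 1)) := by rw [hsp]
          _ = (e * z) * spow z (N - 1) := (mul_assoc _ _ _).symm
          _ = z * spow z (N - 1) := by rw [hez]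
      rcases h6 with h7 | ⟨τ, hτ⟩
      · rcases hz with h8 | ⟨u, hu⟩
        · exact Or.inl (h7.trans h8)
        · exact Or.inr ⟨u, h7.trans hu.symm⟩
      · rcases hz with h8 | ⟨u, hu⟩
        · rw [h8] at hτ
          exact Or.inr ⟨τ, hτ⟩
        · rw [← hu, mul_assoc] at hτ
          exact Or.inr ⟨u * τ, hτ⟩
  -- Step 2: maximal subgroup argument
  rcases hcase with heq | ⟨σ, hσ⟩
  · exact ⟨1, le_rfl, heq.symm⟩
  · have hww : w = w * w * σ := by
      calc w = w * e := h2.symm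
      _ = w * (w * σ) := by rw [← hσ]
      _ = w * w * σ := (mul_assoc _ _ _).symm
    have key : ∀ n, 1 ≤ n → spow w (n + 1) * spow σ n = w := by
      intro n hn
      induction n, hn using Nat.le_induction with
      | base =>
        show (w * w) * σ = w
        exact hww.symm
      | succ n hn ih =>
        calc spow w (n + 2) * spow σ (n + 1)
            = ((spow w n * w) * w) * (σ * spow σ n) := by
              rw [show spow w (n + 2) = spow w (n + 1) * w from spow_succ w (by omega),
                spow_succ w hn, spow_succ' σ hn]
        _ = spow w n * (w * ((w * σ) * spow σ n)) := by simp only [mul_assoc]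
        _ = spow w n * ((w * e) * spow σ n) := by rw [← hσ]; simp only [mul_assoc]
        _ = spow w n * (w * spow σ n) := by rw [h2]
        _ = spow w (n + 1) * spow σ n := by rw [spow_succ w hn]; simp only [mul_assoc]
        _ = w := ih
    obtain ⟨N, hN, hidem⟩ := exists_idem_spow w
    have hsp : spow w (N + 1) = spow w N * w := spow_succ w hN
    have hw2 : (spow w N * w) * spow σ N = w := by rw [← hsp]; exact key N hN
    have hq1 : spow w N * w = w := by
      calc spow w N * w = spow w N * ((spow w N * w) * spow σ N) := by rw [hw2]
      _ = ((spow w N * spow w N) * w) * spow σ N := by simp only [mul_assoc]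
      _ = (spow w N * w) * spow σ N := by rw [hidem]
      _ = w := hw2
    have hqe : spow w N * e = e := by rw [hσ, ← mul_assoc, hq1]
    have hqe' : spow w N * e = spow w N := spow_fix_right h2 N hN
    exact ⟨N, hN, hqe'.symm.trans hqe⟩

/-- The key `DS` step: if `a` is fixed by an idempotent `e` having `g` as a factor,
then right multiplication by `g` preserves the `R`-class, and the new element is again
fixed by an idempotent having `e` as a factor. -/
theorem ds_step [Finite S] (hDS : MemDS S) {a e : S} (g : S) (he : e * e = e)
    (hae : a * e = a) (hFW : FW e g) :
    ∃ z e₁ : S, a = a * g * z ∧ e₁ * e₁ = e₁ ∧ (a * g) * e₁ = a * g ∧ FW e₁ e := by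
  obtain ⟨U, V, hUgV, heU, hVe⟩ := FW_extract he hFW
  have hUgV' : U * (g * V) = e := by rw [← mul_assoc]; exact hUgV
  set f₂ := g * V * U with hf₂def
  have hmid : U * (g * (V * U)) = U := by
    calc U * (g * (V * U)) = (U * (g * V)) * U := by simp only [mul_assoc]
    _ = e * U := by rw [hUgV']
    _ = U := heU
  have hf₂ : f₂ * f₂ = f₂ := by
    calc f₂ * f₂ = g * (V * (U * (g * (V * U)))) := by simp only [hf₂def, mul_assoc]
    _ = g * (V * U) := by rw [hmid]
    _ = f₂ := by simp only [hf₂def, mul_assoc]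
  have hUf₂ : U * f₂ = U := by
    calc U * f₂ = (U * (g * V)) * U := by simp only [hf₂def, mul_assoc]
    _ = U := by rw [hUgV']; exact heU
  have hDef₂ : GreenD e f₂ := by
    refine ⟨U, greenR_of_mem ?_ ?_, greenL_of_mem ?_ ?_⟩
    · exact mem_rIdeal_iff.mpr (Or.inr ⟨g * V, hUgV'⟩)
    · exact mem_rIdeal_iff.mpr (Or.inr ⟨U, heU⟩)
    · exact mem_lIdeal_iff.mpr (Or.inr ⟨U, hUf₂⟩)
    · exact mem_lIdeal_iff.mpr (Or.inr ⟨g * V, rfl⟩)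
  have hDf₂e := greenD_symm hDef₂
  have hDw : GreenD ((e * f₂) * e) e :=
    hDS e (e * f₂) e he (hDS e e f₂ he (greenD_refl e) hDf₂e) (greenD_refl e)
  set w := (e * f₂) * e with hwdef
  have hew : e * w = w := by
    calc e * ((e * f₂) * e) = ((e * e) * f₂) * e := by simp only [mul_assoc]
    _ = (e * f₂) * e := by rw [he]
  have hwe : w * e = w := by
    calc ((e * f₂) * e) * e = (e * f₂) * (e * e) := by simp only [mul_assoc]
    _ = (e * f₂) * e := by rw [he]
  obtain ⟨N, hN, hwN⟩ := spow_eq_idem_of_D he hew hwe hDw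
  have hτex : ∀ n, 1 ≤ n → ∃ τ : S, a * spow w n = a * g * τ ∧ FW τ e := by
    intro n hn
    induction n, hn using Nat.le_induction with
    | base =>
      refine ⟨V * (U * e), ?_, ?_⟩
      · calc a * ((e * f₂) * e) = (a * e) * (f₂ * e) := by simp only [mul_assoc]
        _ = a * (f₂ * e) := by rw [hae]
        _ = a * g * (V * (U * e)) := by simp only [hf₂def, mul_assoc]
      · have : FW ((V * U) * e) e := FW_mul_left (FW_refl e) (V * U)
        rwa [mul_assoc] at this
    | succ n hn ih =>
      obtain ⟨τ, hτ1, hτ2⟩ := ih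
      refine ⟨τ * w, ?_, FW_mul_right hτ2 w⟩
      calc a * spow w (n + 1) = a * (spow w n * w) := by rw [spow_succ w hn]
      _ = (a * spow w n) * w := (mul_assoc _ _ _).symm
      _ = (a * g * τ) * w := by rw [hτ1]
      _ = a * g * (τ * w) := mul_assoc _ _ _
  obtain ⟨τ, hτ1, hτ2⟩ := hτex N hN
  have haτ : a = a * g * τ := by rw [← hτ1, hwN, hae]
  obtain ⟨N₁, hN₁, hidem₁⟩ := exists_idem_spow (τ * g)
  have hbase : (a * g) * (τ * g) = a * g := by
    calc (a * g) * (τ * g) = (a * g * τ) * g := by simp only [mul_assoc]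
    _ = a * g := by rw [← haτ]
  have habs : ∀ n, 1 ≤ n → (a * g) * spow (τ * g) n = a * g := mul_spow_fix hbase
  exact ⟨τ, spow (τ * g) N₁, haτ, hidem₁, habs N₁ hN₁, FW_spow (FW_mul_right hτ2 g) N₁⟩

end StepAux
section WordAux

variable {S : Type*} [Semigroup S]

theorem wOfList_append {L₁ L₂ : List ℕ} (h₁ : L₁ ≠ []) (h₂ : L₂ ≠ []) :
    wOfList (L₁ ++ L₂) = wOfList L₁ * wOfList L₂ := by
  cases L₁ with
  | nil => exact absurd rfl h₁
  | cons a l₁ =>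
    cases L₂ with
    | nil => exact absurd rfl h₂
    | cons b l₂ => rfl

/-- Evaluation of a (nonempty) list of variables in `S` under the substitution `f`. -/
def evalW (f : ℕ → S) (L : List ℕ) : S := FreeSemigroup.lift f (wOfList L)

theorem evalW_append (f : ℕ → S) {L₁ L₂ : List ℕ} (h₁ : L₁ ≠ []) (h₂ : L₂ ≠ []) :
    evalW f (L₁ ++ L₂) = evalW f L₁ * evalW f L₂ := by
  rw [evalW, wOfList_append h₁ h₂, map_mul]; rfl

theorem evalW_singleton (f : ℕ → S) (α : ℕ) : evalW f [α] = f α :=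
  FreeSemigroup.lift_of f α

theorem evalW_cons (f : ℕ → S) {α : ℕ} {L : List ℕ} (h : L ≠ []) :
    evalW f (α :: L) = f α * evalW f L := by
  rw [show α :: L = [α] ++ L from rfl, evalW_append f (by simp) h, evalW_singleton]

theorem FW_evalW {f : ℕ → S} : ∀ {L : List ℕ} {α : ℕ}, α ∈ L → FW (evalW f L) (f α) := by
  intro L
  induction L with
  | nil => intro α h; simp at h
  | cons β L ih =>
    intro α h
    rcases List.mem_cons.mp h with rfl | h'
    · rcases eq_or_ne L [] with rfl | hL
      · rw [evalW_singleton]; exact FW_refl _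
      · rw [evalW_cons f hL]; exact FW_mul_right (FW_refl (f α)) _
    · have hL : L ≠ [] := List.ne_nil_of_mem h'
      rw [evalW_cons f hL]
      exact FW_mul_left (ih h') (f β)

/-- The invariant carried along the chain: `a` is fixed on the right by an idempotent that
has every variable of `A` (under `f`) as a factor. -/
def ChainInv (f : ℕ → S) (A : Finset ℕ) (a : S) : Prop :=
  ∃ e, e * e = e ∧ a * e = a ∧ ∀ α ∈ A, FW e (f α)

theorem ds_chain [Finite S] (hDS : MemDS S) (f : ℕ → S) (A : Finset ℕ) :
    ∀ L : List ℕ, L ≠ [] → (∀ α ∈ L, α ∈ A) → ∀ a : S, ChainInv f A a →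
      ∃ z : S, a = (a * evalW f L) * z ∧ ChainInv f A (a * evalW f L) := by
  intro L
  induction L with
  | nil => intro h; exact absurd rfl h
  | cons α L ih =>
    intro _ hmem a hInv
    obtain ⟨e, he, hae, hFWs⟩ := hInv
    obtain ⟨z₀, e₁, hz₀, he₁, habs₁, hFW₁⟩ :=
      ds_step hDS (f α) he hae (hFWs α (hmem α List.mem_cons_self))
    have hInv' : ChainInv f A (a * f α) :=
      ⟨e₁, he₁, habs₁, fun β hβ => FW_trans hFW₁ (hFWs β hβ)⟩
    rcases eq_or_ne L [] with rfl | hL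
    · refine ⟨z₀, ?_, ?_⟩
      · rw [evalW_singleton]; exact hz₀
      · rw [evalW_singleton]; exact hInv'
    · obtain ⟨z, hz, hInv''⟩ :=
        ih hL (fun β hβ => hmem β (List.mem_cons_of_mem _ hβ)) (a * f α) hInv'
      refine ⟨z * z₀, ?_, ?_⟩
      · rw [evalW_cons f hL, ← mul_assoc a (f α), ← mul_assoc _ z z₀, ← hz]
        exact hz₀
      · rwa [evalW_cons f hL, ← mul_assoc a (f α)]

/-- From `x = x·x·c` and the exponent hypothesis, `x^{m+1} = x`. -/
theorem subgroup_power_collapse [Finite S] {m : ℕ} (hm : 1 ≤ m)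
    (hexp : ∀ (G : Subsemigroup S) (e : S), IsSubgroupWithIdentity G e →
      ∀ g ∈ G, spow g m = e)
    {x c : S} (hx : x = x * x * c) : spow x (m + 1) = x := by
  obtain ⟨p, hp, hfix⟩ := spow_cycle hx
  have hper : ∀ n, 1 ≤ n → spow x (n + p) = spow x n := by
    intro n hn
    induction n, hn using Nat.le_induction with
    | base => rw [Nat.add_comm, hfix]; rfl
    | succ n hn ih =>
      rw [show n + 1 + p = (n + p) + 1 from by omega, spow_succ x (by omega), ih,
        ← spow_succ x hn]
  have hmulp : ∀ q, 1 ≤ q → spow x (p * q) = spow x p := by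
    intro q hq
    induction q, hq using Nat.le_induction with
    | base => rw [Nat.mul_one]
    | succ q hq ih => rw [show p * (q + 1) = p * q + p from by ring, hper _ (Nat.mul_pos hp hq), ih]
  set G : Subsemigroup S :=
    { carrier := {y | ∃ n, 1 ≤ n ∧ spow x n = y},
      mul_mem' := by
        rintro y z ⟨n, hn, rfl⟩ ⟨n', hn', rfl⟩
        exact ⟨n + n', by omega, spow_add x hn hn'⟩ } with hGdef
  have hxG : x ∈ G := ⟨1, le_rfl, rfl⟩
  have hG : IsSubgroupWithIdentity G (spow x p) := by
    refine ⟨⟨p, hp, rfl⟩, ?_, ?_⟩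
    · rintro y ⟨n, hn, rfl⟩
      constructor
      · rw [← spow_add x hp hn, Nat.add_comm, hper n hn]
      · rw [← spow_add x hn hp, hper n hn]
    · rintro y ⟨n, hn, rfl⟩
      have hj : 1 ≤ (p - 1) * n + p := by omega
      have hsum : n + ((p - 1) * n + p) = p * (n + 1) := by
        cases p with
        | zero => omega
        | succ p' => simp only [Nat.succ_sub_one]; ring
      have hsum' : ((p - 1) * n + p) + n = p * (n + 1) := by omega
      refine ⟨spow x ((p - 1) * n + p), ⟨(p - 1) * n + p, hj, rfl⟩, ?_, ?_⟩
      · rw [← spow_add x hn hj, hsum, hmulp (n + 1) (by omega)]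
      · rw [← spow_add x hj hn, hsum', hmulp (n + 1) (by omega)]
  have hxm : spow x m = spow x p := hexp G (spow x p) hG x hxG
  rw [spow_succ x hm, hxm, ← spow_succ x hp]
  exact hfix

end WordAux
/-- **Lemma on `DS`.** Let `S` be a finite semigroup in `DS` and let `m ≥ 1` be such that
`g^m` is the identity element of `G` for every subgroup `G` of `S`. If a word `u` admits a
decomposition `u = u_0 u_1 ⋯ u_k` with `k > |S|` and `alf(u_0) = alf(u_1) = ⋯ = alf(u_k)`,
then `S` satisfies the identity `u ≈ u^{m+1}`. -/
theorem ds_pow_identity (S : Type) [Semigroup S] [Finite S] (hDS : MemDS S)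
    (m : ℕ) (hm : 1 ≤ m)
    (hexp : ∀ (G : Subsemigroup S) (e : S), IsSubgroupWithIdentity G e →
      ∀ g ∈ G, spow g m = e)
    (k : ℕ) (hk : Nat.card S < k) (us : ℕ → List ℕ)
    (hne : ∀ i ≤ k, us i ≠ [])
    (half : ∀ i ≤ k, (us i).toFinset = (us 0).toFinset) :
    Satisfies S (wOfList ((List.range (k + 1)).flatMap us))
      (wOfList (powerList (m + 1) ((List.range (k + 1)).flatMap us))) := by
  intro f
  set A : Finset ℕ := (us 0).toFinset with hAdef
  set Wl : List ℕ := (List.range (k + 1)).flatMap us with hWldef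
  -- nonemptiness of flatMaps over intervals of indices ≤ k
  have hfm_ne : ∀ (L : List ℕ), L ≠ [] → (∀ l ∈ L, l ≤ k) → L.flatMap us ≠ [] := by
    intro L hL hbd hcon
    rw [List.flatMap_eq_nil_iff] at hcon
    obtain ⟨l, hl⟩ := List.exists_mem_of_ne_nil L hL
    exact hne l (hbd l hl) (hcon l hl)
  have hWne : Wl ≠ [] := by
    refine hfm_ne _ (by simp) ?_
    intro l hl
    rw [List.mem_range] at hl
    omega
  have hletters : ∀ (L : List ℕ), (∀ l ∈ L, l ≤ k) → ∀ α ∈ L.flatMap us, α ∈ A := by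
    intro L hL α hα
    rw [List.mem_flatMap] at hα
    obtain ⟨l, hl, hαl⟩ := hα
    rw [← half l (hL l hl)]
    exact List.mem_toFinset.mpr hαl
  set x : S := evalW f Wl with hxdef
  -- the main argument, given indices i < j ≤ k with equal prefix products
  have main : ∀ i j : ℕ, i < j → j ≤ k →
      evalW f ((List.range (i + 1)).flatMap us) = evalW f ((List.range (j + 1)).flatMap us) →
      evalW f Wl = evalW f (powerList (m + 1) Wl) := by
    intro i j hij hjk hP
    set pre : List ℕ := (List.range (i + 1)).flatMap us with hpredef
    set midI : List ℕ := (List.range (j - i)).map (fun n => (i + 1) + n) with hmidIdef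
    set sufI : List ℕ := (List.range (k - i)).map (fun n => (i + 1) + n) with hsufIdef
    have hmidbd : ∀ l ∈ midI, l ≤ k := by
      intro l hl
      rw [hmidIdef, List.mem_map] at hl
      obtain ⟨n, hn, rfl⟩ := hl
      rw [List.mem_range] at hn
      omega
    have hsufbd : ∀ l ∈ sufI, l ≤ k := by
      intro l hl
      rw [hsufIdef, List.mem_map] at hl
      obtain ⟨n, hn, rfl⟩ := hl
      rw [List.mem_range] at hn
      omega
    set mid : List ℕ := midI.flatMap us with hmiddef
    set suf : List ℕ := sufI.flatMap us with hsufdef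
    have hpre_ne : pre ≠ [] := by
      refine hfm_ne _ (by simp) ?_
      intro l hl; rw [List.mem_range] at hl; omega
    have hmid_ne : mid ≠ [] := by
      refine hfm_ne _ ?_ hmidbd
      rw [hmidIdef]
      simp only [ne_eq, List.map_eq_nil_iff, List.range_eq_nil]
      omega
    have hsuf_ne : suf ≠ [] := by
      refine hfm_ne _ ?_ hsufbd
      rw [hsufIdef]
      simp only [ne_eq, List.map_eq_nil_iff, List.range_eq_nil]
      omega
    have hsplit1 : (List.range (j + 1)).flatMap us = pre ++ mid := by
      rw [hpredef, hmiddef, hmidIdef, ← List.flatMap_append, ← List.range_add,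
        show i + 1 + (j - i) = j + 1 from by omega]
    have hsplit2 : Wl = pre ++ suf := by
      rw [hWldef, hpredef, hsufdef, hsufIdef, ← List.flatMap_append, ← List.range_add,
        show i + 1 + (k - i) = k + 1 from by omega]
    set p : S := evalW f pre with hpdef
    set t : S := evalW f mid with htdef
    set y : S := evalW f suf with hydef
    have hx : x = p * y := by
      rw [hxdef, hsplit2]
      exact evalW_append f hpre_ne hsuf_ne
    have hpt : p = p * t := by
      calc p = evalW f ((List.range (j + 1)).flatMap us) := hP
      _ = evalW f (pre ++ mid) := by rw [hsplit1]
      _ = p * t := evalW_append f hpre_ne hmid_ne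
    -- idempotent power of t
    obtain ⟨N, hN, hidem⟩ := exists_idem_spow t
    have hpe : p * spow t N = p := mul_spow_fix hpt.symm N hN
    have hFWe : ∀ α ∈ A, FW (spow t N) (f α) := by
      intro α hα
      have hmem : α ∈ mid := by
        rw [hmiddef, List.mem_flatMap]
        refine ⟨(i + 1) + 0, ?_, ?_⟩
        · rw [hmidIdef, List.mem_map]
          exact ⟨0, List.mem_range.mpr (by omega), rfl⟩
        · have : α ∈ (us (i + 1 + 0)).toFinset := by
            rw [half (i + 1 + 0) (by omega)]
            exact hα
          exact List.mem_toFinset.mp this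
      exact FW_spow (FW_evalW hmem) N
    have hInvp : ChainInv f A p := ⟨spow t N, hidem, hpe, hFWe⟩
    -- run the chain over suf ++ Wl
    have hLne : suf ++ Wl ≠ [] := by
      intro hcon
      exact hsuf_ne (List.append_eq_nil_iff.mp hcon).1
    have hLmem : ∀ α ∈ suf ++ Wl, α ∈ A := by
      intro α hα
      rcases List.mem_append.mp hα with h | h
      · exact hletters sufI hsufbd α h
      · refine hletters (List.range (k + 1)) ?_ α h
        intro l hl; rw [List.mem_range] at hl; omega
    obtain ⟨z, hz, -⟩ := ds_chain hDS f A (suf ++ Wl) hLne hLmem p hInvp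
    have hev : evalW f (suf ++ Wl) = y * x := by
      rw [evalW_append f hsuf_ne hWne, hydef, hxdef]
    have hxx : p * evalW f (suf ++ Wl) = x * x := by
      rw [hev, ← mul_assoc, ← hx]
    have hpz : p = (x * x) * z := by rw [← hxx]; exact hz
    have hxc : x = x * x * (z * y) := by
      calc x = p * y := hx
      _ = ((x * x) * z) * y := by rw [← hpz]
      _ = x * x * (z * y) := mul_assoc _ _ _
    have hfinal : spow x (m + 1) = x := subgroup_power_collapse hm hexp hxc
    -- evaluate the power word
    have hplne : ∀ n, 1 ≤ n → powerList n Wl ≠ [] := by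
      intro n hn
      induction n, hn using Nat.le_induction with
      | base => simpa [powerList] using hWne
      | succ n hn ih =>
        rw [show powerList (n + 1) Wl = Wl ++ powerList n Wl from by
          simp [powerList, List.replicate_succ]]
        intro hcon
        exact hWne (List.append_eq_nil_iff.mp hcon).1
    have hpow : ∀ n, 1 ≤ n → evalW f (powerList n Wl) = spow x n := by
      intro n hn
      induction n, hn using Nat.le_induction with
      | base => rw [show powerList 1 Wl = Wl from by simp [powerList]]; rfl
      | succ n hn ih =>
        rw [show powerList (n + 1) Wl = Wl ++ powerList n Wl from by
            simp [powerList, List.replicate_succ],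
          evalW_append f hWne (hplne n hn), ih, ← hxdef]
        exact (spow_succ' x hn).symm
    rw [hpow (m + 1) (by omega), hfinal]
  -- pigeonhole on the prefix products
  letI : Fintype S := Fintype.ofFinite S
  obtain ⟨i, j, hij, hPij⟩ := Fintype.exists_ne_map_eq_of_card_lt
    (fun n : Fin (k + 1) => evalW f ((List.range ((n : ℕ) + 1)).flatMap us))
    (by rw [Fintype.card_fin, ← Nat.card_eq_fintype_card]; omega)
  rcases lt_or_gt_of_ne (fun h : (i : ℕ) = (j : ℕ) => hij (Fin.ext h)) with h | h
  · exact main i j h (Nat.lt_succ_iff.mp j.isLt) hPij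
  · exact main j i h (Nat.lt_succ_iff.mp i.isLt) hPij.symm
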